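/- (Sensitivity bound) Let v*_σ be the fixed point of an optimal Bellman-type operator T_σ = max over a parameterized policy class of fixed-policy Bellman operators, and let v̂ satisfy ‖v*_σ - v̂‖_∞ = δ. Let π̂ be greedy for v̂ (T^{π̂} v̂ = T_σ v̂) and π*_σ greedy for v*_σ. Then ‖v*_σ - v^{π̂}‖_∞ ≤ γ δ ‖π*_σ - π̂‖_TV / (1-γ), where ‖π*_σ - π̂‖_TV = max_s Σ_a |π*_σ(a|s) - π̂(a|s)|. -/

import Mathlib

open Finset

/-- One-step return for state `s`, action `a`, value `v`. -/
noncomputable def qOf {S A : Type*} [Fintype S] (γ : ℝ)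
    (r : S → A → ℝ) (P : S → A → S → ℝ) (v : S → ℝ) (s : S) (a : A) : ℝ :=
  r s a + γ * ∑ s', P s a s' * v s'

/-- Fixed-policy Bellman operator. -/
noncomputable def Tpol {S A : Type*} [Fintype S] [Fintype A] (γ : ℝ)
    (r : S → A → ℝ) (P : S → A → S → ℝ) (π : S → A → ℝ) (v : S → ℝ) : S → ℝ :=
  fun s => ∑ a, π s a * qOf γ r P v s a

/-- Optimal Bellman operator. -/
noncomputable def Topt {S A : Type*} [Fintype S] [Fintype A] (γ : ℝ)
    (r : S → A → ℝ) (P : S → A → S → ℝ) (v : S → ℝ) : S → ℝ :=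
  fun s => ⨆ a : A, qOf γ r P v s a

lemma qOf_sub {S A : Type*} [Fintype S] (γ : ℝ)
    (r : S → A → ℝ) (P : S → A → S → ℝ) (u v : S → ℝ) (s : S) (a : A) :
    qOf γ r P u s a - qOf γ r P v s a = γ * ∑ s', P s a s' * (u s' - v s') := by
  simp only [qOf, mul_sub, Finset.sum_sub_distrib, mul_sub]
  ring

lemma expect_abs_le {S : Type*} [Fintype S] (p w : S → ℝ)
    (hp : ∀ s, 0 ≤ p s) (hp1 : ∑ s, p s = 1) :
    |∑ s, p s * w s| ≤ ‖w‖ := by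
  calc |∑ s, p s * w s| ≤ ∑ s, |p s * w s| := Finset.abs_sum_le_sum_abs _ _
    _ ≤ ∑ s, p s * ‖w‖ := by
        refine Finset.sum_le_sum fun s _ => ?_
        rw [abs_mul, abs_of_nonneg (hp s)]
        exact mul_le_mul_of_nonneg_left (by
          rw [← Real.norm_eq_abs]; exact norm_le_pi_norm w s) (hp s)
    _ = ‖w‖ := by rw [← Finset.sum_mul, hp1, one_mul]

/-- Contraction of the fixed-policy operator, pointwise. -/
lemma Tpol_contract {S A : Type*} [Fintype S] [Fintype A] (γ : ℝ) (hγ0 : 0 ≤ γ)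
    (r : S → A → ℝ) (P : S → A → S → ℝ) (π : S → A → ℝ)
    (hP : ∀ s a, (∀ s', 0 ≤ P s a s') ∧ ∑ s', P s a s' = 1)
    (hπ : ∀ s, (∀ a, 0 ≤ π s a) ∧ ∑ a, π s a = 1)
    (u v : S → ℝ) (s : S) :
    |Tpol γ r P π u s - Tpol γ r P π v s| ≤ γ * ‖u - v‖ := by
  have : Tpol γ r P π u s - Tpol γ r P π v s
      = ∑ a, π s a * (γ * ∑ s', P s a s' * (u s' - v s')) := by
    simp only [Tpol, ← Finset.sum_sub_distrib, ← mul_sub, qOf_sub]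
  rw [this]
  calc |∑ a, π s a * (γ * ∑ s', P s a s' * (u s' - v s'))|
      ≤ ∑ a, |π s a * (γ * ∑ s', P s a s' * (u s' - v s'))| :=
        Finset.abs_sum_le_sum_abs _ _
    _ ≤ ∑ a, π s a * (γ * ‖u - v‖) := by
        refine Finset.sum_le_sum fun a _ => ?_
        rw [abs_mul, abs_of_nonneg ((hπ s).1 a), abs_mul, abs_of_nonneg hγ0]
        refine mul_le_mul_of_nonneg_left (mul_le_mul_of_nonneg_left ?_ hγ0) ((hπ s).1 a)
        have := expect_abs_le (P s a) (fun s' => u s' - v s') (hP s a).1 (hP s a).2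
        exact this
    _ = γ * ‖u - v‖ := by rw [← Finset.sum_mul, (hπ s).2, one_mul]

theorem generalized_sensitivity_bound
    {S A : Type*} [Fintype S] [Fintype A] [Nonempty S] [Nonempty A]
    (γ δ : ℝ) (hγ0 : 0 ≤ γ) (hγ1 : γ < 1)
    (r : S → A → ℝ) (P : S → A → S → ℝ) (πstar πhat : S → A → ℝ)
    (hP : ∀ s a, (∀ s', 0 ≤ P s a s') ∧ ∑ s', P s a s' = 1)
    (hπstar : ∀ s, (∀ a, 0 ≤ πstar s a) ∧ ∑ a, πstar s a = 1)
    (hπhat : ∀ s, (∀ a, 0 ≤ πhat s a) ∧ ∑ a, πhat s a = 1)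
    (Tσ : (S → ℝ) → (S → ℝ))
    (hdomstar : ∀ v : S → ℝ, Tpol γ r P πstar v ≤ Tσ v)
    (hdomhat : ∀ v : S → ℝ, Tpol γ r P πhat v ≤ Tσ v)
    (hcontr : ∀ u v : S → ℝ, ‖Tσ u - Tσ v‖ ≤ γ * ‖u - v‖)
    (vstar vhat vπhat : S → ℝ)
    (hfix : Tσ vstar = vstar)
    (hgreedystar : Tpol γ r P πstar vstar = Tσ vstar)
    (hgreedyhat : Tpol γ r P πhat vhat = Tσ vhat)
    (hvπhat : Tpol γ r P πhat vπhat = vπhat)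
    (hδ : ‖vstar - vhat‖ = δ)
    (TV : ℝ) (hTV : TV = ⨆ s : S, ∑ a, |πstar s a - πhat s a|) :
    ‖vstar - vπhat‖ ≤ γ * δ * TV / (1 - γ) := by
  set N := ‖vstar - vπhat‖ with hN
  have hδ0 : 0 ≤ δ := hδ ▸ norm_nonneg _
  have hN0 : 0 ≤ N := norm_nonneg _
  have hTV0 : 0 ≤ TV := by
    obtain ⟨s⟩ := ‹Nonempty S›
    rw [hTV]
    calc (0:ℝ) ≤ ∑ a, |πstar s a - πhat s a| :=
          Finset.sum_nonneg fun a _ => abs_nonneg _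
      _ ≤ _ := le_ciSup (Finite.bddAbove_range (fun s : S => ∑ a, |πstar s a - πhat s a|)) s
  -- key bound B: Tσ vstar s - Tpol πhat vstar s ∈ [0, γ δ TV]
  have hB : ∀ s, Tσ vstar s - Tpol γ r P πhat vstar s ≤ γ * δ * TV := by
    intro s
    have hstep : ∑ a, (πstar s a - πhat s a) * qOf γ r P vhat s a ≤ 0 := by
      have h1 : Tpol γ r P πstar vhat s ≤ Tpol γ r P πhat vhat s := by
        have := hdomstar vhat s
        rw [← hgreedyhat] at this
        exact this
      have : Tpol γ r P πstar vhat s - Tpol γ r P πhat vhat s ≤ 0 := sub_nonpos.2 h1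
      simpa [Tpol, ← Finset.sum_sub_distrib, ← sub_mul] using this
    have heq : Tσ vstar s - Tpol γ r P πhat vstar s
        = ∑ a, (πstar s a - πhat s a) * qOf γ r P vstar s a := by
      rw [← hgreedystar]
      simp [Tpol, ← Finset.sum_sub_distrib, ← sub_mul]
    rw [heq]
    have key : ∑ a, (πstar s a - πhat s a) * qOf γ r P vstar s a
        ≤ ∑ a, (πstar s a - πhat s a) * (qOf γ r P vstar s a - qOf γ r P vhat s a) := by
      have : ∑ a, (πstar s a - πhat s a) * (qOf γ r P vstar s a - qOf γ r P vhat s a)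
          = ∑ a, (πstar s a - πhat s a) * qOf γ r P vstar s a
            - ∑ a, (πstar s a - πhat s a) * qOf γ r P vhat s a := by
        simp [mul_sub, Finset.sum_sub_distrib]
      rw [this]
      linarith
    refine key.trans ?_
    calc ∑ a, (πstar s a - πhat s a) * (qOf γ r P vstar s a - qOf γ r P vhat s a)
        ≤ ∑ a, |πstar s a - πhat s a| * (γ * δ) := by
          refine Finset.sum_le_sum fun a _ => ?_
          rw [qOf_sub]
          calc (πstar s a - πhat s a) * (γ * ∑ s', P s a s' * (vstar s' - vhat s'))
              ≤ |(πstar s a - πhat s a) * (γ * ∑ s', P s a s' * (vstar s' - vhat s'))| :=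
                le_abs_self _
            _ = |πstar s a - πhat s a| * (γ * |∑ s', P s a s' * (vstar s' - vhat s')|) := by
                rw [abs_mul, abs_mul, abs_of_nonneg hγ0]
            _ ≤ |πstar s a - πhat s a| * (γ * δ) := by
                refine mul_le_mul_of_nonneg_left (mul_le_mul_of_nonneg_left ?_ hγ0) (abs_nonneg _)
                rw [← hδ]
                have := expect_abs_le (P s a) (fun s' => vstar s' - vhat s') (hP s a).1 (hP s a).2
                exact this
      _ = (∑ a, |πstar s a - πhat s a|) * (γ * δ) := by rw [Finset.sum_mul]
      _ ≤ TV * (γ * δ) := by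
          refine mul_le_mul_of_nonneg_right ?_ (by positivity)
          rw [hTV]
          exact le_ciSup (Finite.bddAbove_range (fun s : S => ∑ a, |πstar s a - πhat s a|)) s
      _ = γ * δ * TV := by ring
  have hB0 : ∀ s, 0 ≤ Tσ vstar s - Tpol γ r P πhat vstar s := fun s =>
    sub_nonneg.2 (hdomhat vstar s)
  -- main pointwise bound
  have hmain : ∀ s, |vstar s - vπhat s| ≤ γ * δ * TV + γ * N := by
    intro s
    have hdec : vstar s - vπhat s
        = (Tσ vstar s - Tpol γ r P πhat vstar s)
          + (Tpol γ r P πhat vstar s - Tpol γ r P πhat vπhat s) := by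
      rw [hvπhat, hfix]; ring
    rw [hdec]
    have h2 := Tpol_contract γ hγ0 r P πhat hP hπhat vstar vπhat s
    calc |(Tσ vstar s - Tpol γ r P πhat vstar s)
          + (Tpol γ r P πhat vstar s - Tpol γ r P πhat vπhat s)|
        ≤ |Tσ vstar s - Tpol γ r P πhat vstar s|
          + |Tpol γ r P πhat vstar s - Tpol γ r P πhat vπhat s| := abs_add_le _ _
      _ ≤ γ * δ * TV + γ * N := by
          refine add_le_add ?_ h2
          rw [abs_of_nonneg (hB0 s)]; exact hB s
  have hNle : N ≤ γ * δ * TV + γ * N := by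
    have : 0 ≤ γ * δ * TV + γ * N := by positivity
    rw [hN]
    refine (pi_norm_le_iff_of_nonneg this).2 fun s => ?_
    simpa [Real.norm_eq_abs] using hmain s
  rw [le_div_iff₀ (by linarith)]
  linarith
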